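/- arXiv:2207.06005 — 4 statements merged into one kernel-verified Lean document; each statement's English description precedes it below -/
import Mathlib

section
/- Let q ≥ 0 be an integer, let G and H be groups, and let A ≤ E^∧_q(G) and B ≤ E^∧_q(H) be subgroups. If G/A ≅ H/B, then G∧^q G ≅ H∧^q H. -/
/-!
Nonabelian tensor square modulo `q` (Conduché–Ellis / Brown–Loday for `q = 0`),
presented by generators `g ⊗ h` and `{(g,g)}` with the defining relations.
-/

namespace QTensor

/-- Generators of the `q`-tensor square: `t g h` stands for `g ⊗ h`,
and `d g` stands for the symbol `{(g,g)}`. -/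
inductive Gen (G : Type) : Type
  | t : G → G → Gen G
  | d : G → Gen G

variable (G : Type) [Group G]

/-- The word `g ⊗ h` in the free group on the generators. -/
def T (g h : G) : FreeGroup (Gen G) := FreeGroup.of (Gen.t g h)

/-- The word `{(g,g)}` in the free group on the generators. -/
def D (g : G) : FreeGroup (Gen G) := FreeGroup.of (Gen.d g)

/-- The word `∏_{i=1}^{q-1} (g⁻¹ ⊗ (^(g^(1-q+i)) g₁)^i)` appearing in relation (4). -/
def relProd (q : ℕ) (g g₁ : G) : FreeGroup (Gen G) :=
  ((List.range (q - 1)).map (fun j =>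
    T G g⁻¹ ((g ^ ((1 : ℤ) - (q : ℤ) + (j + 1 : ℕ)) * g₁ *
      (g ^ ((1 : ℤ) - (q : ℤ) + (j + 1 : ℕ)))⁻¹) ^ (j + 1)))).prod

/-- The defining relations of the `q`-tensor square.  For `q = 0` the symbols
`{(g,g)}` are killed, so that the group is the Brown–Loday nonabelian tensor
square generated by the `g ⊗ h` subject to relations (1) and (2). -/
def rels (q : ℕ) : Set (FreeGroup (Gen G)) :=
  {r | ∃ g g₁ h : G,
      r = T G (g * g₁) h * (T G (g * g₁ * g⁻¹) (g * h * g⁻¹) * T G g h)⁻¹} ∪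
  {r | ∃ g h h₁ : G,
      r = T G g (h * h₁) * (T G g h * T G (h * g * h⁻¹) (h * h₁ * h⁻¹))⁻¹} ∪
  {r | ∃ g g₁ h₁ : G,
      r = D G g * T G g₁ h₁ * (D G g)⁻¹ *
        (T G (g ^ q * g₁ * (g ^ q)⁻¹) (g ^ q * h₁ * (g ^ q)⁻¹))⁻¹} ∪
  {r | ∃ g g₁ : G,
      r = D G (g * g₁) * (D G g * relProd G q g g₁ * D G g₁)⁻¹} ∪
  {r | ∃ g g₁ : G,
      r = D G g * D G g₁ * (D G g)⁻¹ * (D G g₁)⁻¹ * (T G (g ^ q) (g₁ ^ q))⁻¹} ∪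
  {r | ∃ g h : G,
      r = D G (g * h * g⁻¹ * h⁻¹) * ((T G g h) ^ q)⁻¹} ∪
  {r | q = 0 ∧ ∃ g : G, r = D G g}

/-- The nonabelian tensor square modulo `q`, `G ⊗^q G`. -/
def tensorSquare (q : ℕ) : Type := PresentedGroup (rels G q)

instance (q : ℕ) : Group (tensorSquare G q) := by unfold tensorSquare; infer_instance

/-- The element `g ⊗ h` of `G ⊗^q G`. -/
def tmk (q : ℕ) (g h : G) : tensorSquare G q := PresentedGroup.of (Gen.t g h)

/-- The element `{(g,g)}` of `G ⊗^q G`. -/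
def dmk (q : ℕ) (g : G) : tensorSquare G q := PresentedGroup.of (Gen.d g)

/-- `∇^q(G)`, the normal closure of the elements `g ⊗ g` in `G ⊗^q G`. -/
def nabla (q : ℕ) : Subgroup (tensorSquare G q) :=
  Subgroup.normalClosure {x | ∃ g : G, x = tmk G q g g}

instance (q : ℕ) : (nabla G q).Normal := Subgroup.normalClosure_normal

/-- The exterior square modulo `q`, `G ∧^q G = (G ⊗^q G)/∇^q(G)`. -/
def extSquare (q : ℕ) : Type := tensorSquare G q ⧸ nabla G q

instance (q : ℕ) : Group (extSquare G q) := by unfold extSquare; infer_instance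

/-- The element `g ∧ h` of `G ∧^q G`. -/
def wmk (q : ℕ) (g h : G) : extSquare G q := QuotientGroup.mk (tmk G q g h)

/-- The image of the symbol `{(g,g)}` in `G ∧^q G`. -/
def dwmk (q : ℕ) (g : G) : extSquare G q := QuotientGroup.mk (dmk G q g)

/-- The exterior centre variant `Z^∧_q(G) = {g : g ∧ h = 1 for all h}` (as a set). -/
def Zext (q : ℕ) : Set G := {g | ∀ h : G, wmk G q g h = 1}

/-- `E^∧_q(G) = {g ∈ Z^∧_q(G) : {(g,g)} = 1 in G ∧^q G}` (as a set); for `q = 0`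
the second condition is automatic, so `E^∧_0(G) = Z^∧(G)`. -/
def Eext (q : ℕ) : Set G := {g | (∀ h : G, wmk G q g h = 1) ∧ dwmk G q g = 1}

/-- The subgroup `G^q[G,G]` generated by all `q`-th powers and all commutators. -/
def qPowComm (q : ℕ) : Subgroup G :=
  Subgroup.closure ({x | ∃ g : G, x = g ^ q} ∪ {x | ∃ a b : G, x = a * b * a⁻¹ * b⁻¹})

theorem pow_mem_qPowComm (q : ℕ) (g : G) : g ^ q ∈ qPowComm G q :=
  Subgroup.subset_closure (Or.inl ⟨g, rfl⟩)

theorem commutator_mem_qPowComm (q : ℕ) (a b : G) :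
    a * b * a⁻¹ * b⁻¹ ∈ qPowComm G q :=
  Subgroup.subset_closure (Or.inr ⟨a, b, rfl⟩)

open scoped commutatorElement in
theorem mem_commutator (a b : G) : ⁅a, b⁆ ∈ commutator G :=
  Subgroup.commutator_mem_commutator (Subgroup.mem_top a) (Subgroup.mem_top b)

/-- `M₀^q(G)`: the subgroup of `G ∧^q G` generated by the `x ∧ y` with `[x,y] = 1`.
(It is contained in the `q`-Schur multiplier `M^q(G)`.) -/
def M0 (q : ℕ) : Subgroup (extSquare G q) :=
  Subgroup.closure {x | ∃ a b : G, a * b = b * a ∧ x = wmk G q a b}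

/-- `M̂₀^q(G)`: the subgroup of `G ∧^q G` generated by the `x ∧ y` with `[x,y] = 1`
together with the `{(g,g)}` with `g^q = 1`. -/
def M0hat (q : ℕ) : Subgroup (extSquare G q) :=
  Subgroup.closure
    ({x | ∃ a b : G, a * b = b * a ∧ x = wmk G q a b} ∪
     {x | ∃ g : G, g ^ q = 1 ∧ x = dwmk G q g})

/-- A group `Q` is capable if `Q ≅ E/Z(E)` for some group `E`. -/
def Capable (Q : Type) [Group Q] : Prop :=
  ∃ (E : Type) (_ : Group E), Nonempty (Q ≃* E ⧸ Subgroup.center E)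

end QTensor

namespace QTensor

variable {G : Type} [Group G]

/-- The canonical map from the free group on the generators to the exterior square. -/
def prF (G : Type) [Group G] (q : ℕ) : FreeGroup (Gen G) →* extSquare G q :=
  (QuotientGroup.mk' (nabla G q)).comp (PresentedGroup.mk (rels G q))

lemma prF_T (q : ℕ) (g h : G) : prF G q (T G g h) = wmk G q g h := rfl

lemma prF_D (q : ℕ) (g : G) : prF G q (D G g) = dwmk G q g := rfl

lemma prF_rels {q : ℕ} {r : FreeGroup (Gen G)} (hr : r ∈ rels G q) : prF G q r = 1 := by
  have h1 : PresentedGroup.mk (rels G q) r = 1 :=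
    (QuotientGroup.eq_one_iff _).mpr (Subgroup.subset_normalClosure hr)
  show (QuotientGroup.mk' (nabla G q)) (PresentedGroup.mk (rels G q) r) = 1
  rw [h1]
  exact map_one _

lemma wmk_diag (q : ℕ) (g : G) : wmk G q g g = 1 :=
  (QuotientGroup.eq_one_iff _).mpr (Subgroup.subset_normalClosure ⟨g, rfl⟩)

lemma wrel1 (q : ℕ) (g g₁ h : G) :
    wmk G q (g * g₁) h = wmk G q (g * g₁ * g⁻¹) (g * h * g⁻¹) * wmk G q g h := by
  have := prF_rels (G := G) (q := q)
    (Or.inl (Or.inl (Or.inl (Or.inl (Or.inl (Or.inl ⟨g, g₁, h, rfl⟩))))))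
  rw [map_mul, map_inv, mul_inv_eq_one, map_mul] at this
  exact this

lemma wrel2 (q : ℕ) (g h h₁ : G) :
    wmk G q g (h * h₁) = wmk G q g h * wmk G q (h * g * h⁻¹) (h * h₁ * h⁻¹) := by
  have := prF_rels (G := G) (q := q)
    (Or.inl (Or.inl (Or.inl (Or.inl (Or.inl (Or.inr ⟨g, h, h₁, rfl⟩))))))
  rw [map_mul, map_inv, mul_inv_eq_one, map_mul] at this
  exact this

lemma wrel3 (q : ℕ) (g g₁ h₁ : G) :
    dwmk G q g * wmk G q g₁ h₁ * (dwmk G q g)⁻¹ =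
      wmk G q (g ^ q * g₁ * (g ^ q)⁻¹) (g ^ q * h₁ * (g ^ q)⁻¹) := by
  have := prF_rels (G := G) (q := q)
    (Or.inl (Or.inl (Or.inl (Or.inl (Or.inr ⟨g, g₁, h₁, rfl⟩)))))
  rw [map_mul, map_inv, mul_inv_eq_one, map_mul, map_mul, map_inv] at this
  exact this

lemma wrel4 (q : ℕ) (g g₁ : G) :
    dwmk G q (g * g₁) = dwmk G q g *
      ((List.range (q - 1)).map (fun j =>
        wmk G q g⁻¹ ((g ^ ((1 : ℤ) - (q : ℤ) + (j + 1 : ℕ)) * g₁ *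
          (g ^ ((1 : ℤ) - (q : ℤ) + (j + 1 : ℕ)))⁻¹) ^ (j + 1)))).prod * dwmk G q g₁ := by
  have := prF_rels (G := G) (q := q)
    (Or.inl (Or.inl (Or.inl (Or.inr ⟨g, g₁, rfl⟩))))
  rw [map_mul, map_inv, mul_inv_eq_one, map_mul, map_mul] at this
  simp only [prF_D] at this
  rw [this]
  congr 1
  congr 1
  rw [relProd, map_list_prod, List.map_map]
  rfl

lemma wrel5 (q : ℕ) (g g₁ : G) :
    dwmk G q g * dwmk G q g₁ * (dwmk G q g)⁻¹ * (dwmk G q g₁)⁻¹ =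
      wmk G q (g ^ q) (g₁ ^ q) := by
  have := prF_rels (G := G) (q := q)
    (Or.inl (Or.inl (Or.inr ⟨g, g₁, rfl⟩)))
  rw [map_mul, map_inv, mul_inv_eq_one, map_mul, map_inv, map_mul, map_inv, map_mul] at this
  exact this

lemma wrel6 (q : ℕ) (g h : G) :
    dwmk G q (g * h * g⁻¹ * h⁻¹) = (wmk G q g h) ^ q := by
  have := prF_rels (G := G) (q := q)
    (Or.inl (Or.inr ⟨g, h, rfl⟩))
  rw [map_mul, map_inv, mul_inv_eq_one, map_pow] at this
  exact this

lemma wrel7 {q : ℕ} (hq : q = 0) (g : G) : dwmk G q g = 1 := by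
  have := prF_rels (G := G) (q := q) (Or.inr ⟨hq, g, rfl⟩)
  exact this

lemma wmk_symm (q : ℕ) (x a : G) : wmk G q a x * wmk G q x a = 1 := by
  have key : ∀ y : G, wmk G q (x * y * x⁻¹) x * wmk G q x (x * y * x⁻¹) = 1 := by
    intro y
    have h0 : (1 : extSquare G q) = wmk G q (x * y) (x * y) := (wmk_diag q (x * y)).symm
    rw [wrel2 q (x * y) x y] at h0
    rw [wrel1 q x y x] at h0
    rw [show x * x * x⁻¹ = x by group] at h0
    rw [wmk_diag q x, mul_one] at h0
    rw [show x * (x * y) * x⁻¹ = x * (x * y * x⁻¹) by group] at h0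
    rw [wrel1 q x (x * y * x⁻¹) (x * y * x⁻¹)] at h0
    rw [wmk_diag q (x * (x * y * x⁻¹) * x⁻¹), one_mul] at h0
    exact h0.symm
  have h := key (x⁻¹ * a * x)
  rwa [show x * (x⁻¹ * a * x) * x⁻¹ = a by group] at h

end QTensor

namespace QTensor

variable {G : Type} [Group G]

section cancel

variable {q : ℕ} {A : Subgroup G} [A.Normal] (hA : (A : Set G) ⊆ Eext G q)

include hA in
lemma wmk_left_one {a : G} (ha : a ∈ A) (h : G) : wmk G q a h = 1 := (hA ha).1 h

include hA in
lemma wmk_right_one {a : G} (ha : a ∈ A) (g : G) : wmk G q g a = 1 := by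
  have h := wmk_symm q g a
  rwa [wmk_left_one hA ha g, one_mul] at h

include hA in
lemma wmk_left_cancel {a : G} (ha : a ∈ A) (g h : G) : wmk G q (g * a) h = wmk G q g h := by
  rw [wrel1 q g a h, wmk_left_one hA (‹A.Normal›.conj_mem a ha g) (g * h * g⁻¹), one_mul]

include hA in
lemma wmk_right_cancel {a : G} (ha : a ∈ A) (g h : G) : wmk G q g (h * a) = wmk G q g h := by
  rw [wrel2 q g h a, wmk_right_one hA (‹A.Normal›.conj_mem a ha h) (h * g * h⁻¹), mul_one]

include hA in
lemma dwmk_cancel {a : G} (ha : a ∈ A) (g : G) : dwmk G q (g * a) = dwmk G q g := by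
  rw [wrel4 q g a, (hA ha).2, mul_one]
  have hp : ((List.range (q - 1)).map (fun j =>
      wmk G q g⁻¹ ((g ^ ((1 : ℤ) - (q : ℤ) + (j + 1 : ℕ)) * a *
        (g ^ ((1 : ℤ) - (q : ℤ) + (j + 1 : ℕ)))⁻¹) ^ (j + 1)))).prod = 1 := by
    apply List.prod_eq_one
    intro x hx
    obtain ⟨j, _, rfl⟩ := List.mem_map.mp hx
    exact wmk_right_one hA
      (A.pow_mem (‹A.Normal›.conj_mem a ha (g ^ ((1 : ℤ) - (q : ℤ) + (j + 1 : ℕ)))) (j + 1)) g⁻¹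
  rw [hp, mul_one]

/-- `g ∧ h` as a function of the cosets of `A`. -/
def wbar (q : ℕ) (A : Subgroup G) [A.Normal] (hA : (A : Set G) ⊆ Eext G q) :
    G ⧸ A → G ⧸ A → extSquare G q :=
  Quotient.lift₂ (fun g h : G => wmk G q g h) <| by
    intro a₁ b₁ a₂ b₂ ha hb
    replace ha : a₁⁻¹ * a₂ ∈ A := QuotientGroup.leftRel_apply.mp ha
    replace hb : b₁⁻¹ * b₂ ∈ A := QuotientGroup.leftRel_apply.mp hb
    have e1 : wmk G q a₂ b₂ = wmk G q a₂ b₁ := by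
      conv_lhs => rw [show b₂ = b₁ * (b₁⁻¹ * b₂) by group]
      exact wmk_right_cancel hA hb a₂ b₁
    have e2 : wmk G q a₂ b₁ = wmk G q a₁ b₁ := by
      conv_lhs => rw [show a₂ = a₁ * (a₁⁻¹ * a₂) by group]
      exact wmk_left_cancel hA ha a₁ b₁
    exact (e1.trans e2).symm

/-- `{(g,g)}` as a function of the coset of `A`. -/
def dbar (q : ℕ) (A : Subgroup G) [A.Normal] (hA : (A : Set G) ⊆ Eext G q) :
    G ⧸ A → extSquare G q :=
  Quotient.lift (fun g : G => dwmk G q g) <| by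
    intro a₁ a₂ ha
    replace ha : a₁⁻¹ * a₂ ∈ A := QuotientGroup.leftRel_apply.mp ha
    conv_rhs => rw [show a₂ = a₁ * (a₁⁻¹ * a₂) by group]
    exact (dwmk_cancel hA ha a₁).symm

@[simp] lemma wbar_mk (g h : G) : wbar q A hA (↑g) (↑h) = wmk G q g h := rfl

@[simp] lemma dbar_mk (g : G) : dbar q A hA (↑g) = dwmk G q g := rfl

end cancel

section lift

variable {K : Type} [Group K]

/-- Interpretation of the generators. -/
def genMap (w : G → G → K) (d : G → K) : Gen G → K
  | .t g h => w g h
  | .d g => d g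

@[simp] lemma lift_genMap_T (w : G → G → K) (d : G → K) (g h : G) :
    FreeGroup.lift (genMap w d) (T G g h) = w g h := FreeGroup.lift_apply_of

@[simp] lemma lift_genMap_D (w : G → G → K) (d : G → K) (g : G) :
    FreeGroup.lift (genMap w d) (D G g) = d g := FreeGroup.lift_apply_of

lemma lift_genMap_relProd (w : G → G → K) (d : G → K) (q : ℕ) (g g₁ : G) :
    FreeGroup.lift (genMap w d) (relProd G q g g₁) =
      ((List.range (q - 1)).map (fun j =>
        w g⁻¹ ((g ^ ((1 : ℤ) - (q : ℤ) + (j + 1 : ℕ)) * g₁ *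
          (g ^ ((1 : ℤ) - (q : ℤ) + (j + 1 : ℕ)))⁻¹) ^ (j + 1)))).prod := by
  rw [relProd, map_list_prod, List.map_map]
  simp only [Function.comp_def, lift_genMap_T]

variable (q : ℕ) (w : G → G → K) (d : G → K)
  (h1 : ∀ g g₁ h : G, w (g * g₁) h = w (g * g₁ * g⁻¹) (g * h * g⁻¹) * w g h)
  (h2 : ∀ g h h₁ : G, w g (h * h₁) = w g h * w (h * g * h⁻¹) (h * h₁ * h⁻¹))
  (h3 : ∀ g g₁ h₁ : G, d g * w g₁ h₁ * (d g)⁻¹ =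
    w (g ^ q * g₁ * (g ^ q)⁻¹) (g ^ q * h₁ * (g ^ q)⁻¹))
  (h4 : ∀ g g₁ : G, d (g * g₁) = d g *
    ((List.range (q - 1)).map (fun j =>
      w g⁻¹ ((g ^ ((1 : ℤ) - (q : ℤ) + (j + 1 : ℕ)) * g₁ *
        (g ^ ((1 : ℤ) - (q : ℤ) + (j + 1 : ℕ)))⁻¹) ^ (j + 1)))).prod * d g₁)
  (h5 : ∀ g g₁ : G, d g * d g₁ * (d g)⁻¹ * (d g₁)⁻¹ = w (g ^ q) (g₁ ^ q))
  (h6 : ∀ g h : G, d (g * h * g⁻¹ * h⁻¹) = (w g h) ^ q)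
  (h7 : q = 0 → ∀ g : G, d g = 1)
  (hdiag : ∀ g : G, w g g = 1)

include h1 h2 h3 h4 h5 h6 h7 in
lemma extLift_rels : ∀ r ∈ rels G q, FreeGroup.lift (genMap w d) r = 1 := by
  intro r hr
  rcases hr with ((((((⟨g, g₁, h, rfl⟩ | ⟨g, h, h₁, rfl⟩) | ⟨g, g₁, h₁, rfl⟩) |
    ⟨g, g₁, rfl⟩) | ⟨g, g₁, rfl⟩) | ⟨g, h, rfl⟩) | ⟨hq, g, rfl⟩)
  · rw [map_mul, map_inv, mul_inv_eq_one, map_mul]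
    simp only [lift_genMap_T]
    exact h1 g g₁ h
  · rw [map_mul, map_inv, mul_inv_eq_one, map_mul]
    simp only [lift_genMap_T]
    exact h2 g h h₁
  · rw [map_mul, map_inv, mul_inv_eq_one, map_mul, map_mul, map_inv]
    simp only [lift_genMap_T, lift_genMap_D]
    exact h3 g g₁ h₁
  · rw [map_mul, map_inv, mul_inv_eq_one, map_mul, map_mul]
    simp only [lift_genMap_T, lift_genMap_D, lift_genMap_relProd]
    exact h4 g g₁
  · rw [map_mul, map_inv, mul_inv_eq_one, map_mul, map_inv, map_mul, map_inv, map_mul]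
    simp only [lift_genMap_T, lift_genMap_D]
    exact h5 g g₁
  · rw [map_mul, map_inv, mul_inv_eq_one, map_pow]
    simp only [lift_genMap_T, lift_genMap_D]
    exact h6 g h
  · rw [lift_genMap_D]
    exact h7 hq g

include h1 h2 h3 h4 h5 h6 h7 hdiag in
/-- The universal property of the exterior square modulo `q`. -/
def extLift : extSquare G q →* K :=
  QuotientGroup.lift (nabla G q)
    (PresentedGroup.toGroup (extLift_rels q w d h1 h2 h3 h4 h5 h6 h7)) <| by
    intro x hx
    refine MonoidHom.mem_ker.mp (Subgroup.normalClosure_le_normal (N := MonoidHom.ker (PresentedGroup.toGroup (extLift_rels q w d h1 h2 h3 h4 h5 h6 h7) : tensorSquare G q →* K)) ?_ hx)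
    rintro y ⟨g, rfl⟩
    refine MonoidHom.mem_ker.mpr ?_
    show PresentedGroup.toGroup _ (PresentedGroup.of (Gen.t g g)) = 1
    rw [PresentedGroup.toGroup.of]
    exact hdiag g

@[simp] lemma extLift_wmk (g h : G) :
    extLift q w d h1 h2 h3 h4 h5 h6 h7 hdiag (wmk G q g h) = w g h := by
  show QuotientGroup.lift _ _ _ (QuotientGroup.mk (tmk G q g h)) = w g h
  show PresentedGroup.toGroup (extLift_rels q w d h1 h2 h3 h4 h5 h6 h7) (PresentedGroup.of (rels := rels G q) (Gen.t g h)) = w g h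
  exact PresentedGroup.toGroup.of _

@[simp] lemma extLift_dwmk (g : G) :
    extLift q w d h1 h2 h3 h4 h5 h6 h7 hdiag (dwmk G q g) = d g := by
  show QuotientGroup.lift _ _ _ (QuotientGroup.mk (dmk G q g)) = d g
  show PresentedGroup.toGroup (extLift_rels q w d h1 h2 h3 h4 h5 h6 h7) (PresentedGroup.of (rels := rels G q) (Gen.d g)) = d g
  exact PresentedGroup.toGroup.of _

end lift

/-- Two homomorphisms out of the exterior square agreeing on generators are equal. -/
lemma extHom_ext {K : Type} [Group K] {q : ℕ} {f₁ f₂ : extSquare G q →* K}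
    (hw : ∀ g h : G, f₁ (wmk G q g h) = f₂ (wmk G q g h))
    (hd : ∀ g : G, f₁ (dwmk G q g) = f₂ (dwmk G q g)) : f₁ = f₂ := by
  refine QuotientGroup.monoidHom_ext (nabla G q) (PresentedGroup.ext fun x => ?_)
  cases x with
  | t g h => exact hw g h
  | d g => exact hd g



end QTensor

namespace QTensor

section maps

variable {G H : Type} [Group G] [Group H]

/-- Functoriality of the exterior square modulo `q`. -/
def extMapHom (q : ℕ) (φ : G →* H) : extSquare G q →* extSquare H q :=
  extLift q (fun g h => wmk H q (φ g) (φ h)) (fun g => dwmk H q (φ g))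
    (fun g g₁ h => by simp only [map_mul, map_inv]; exact wrel1 q (φ g) (φ g₁) (φ h))
    (fun g h h₁ => by simp only [map_mul, map_inv]; exact wrel2 q (φ g) (φ h) (φ h₁))
    (fun g g₁ h₁ => by simp only [map_mul, map_inv, map_pow]; exact wrel3 q (φ g) (φ g₁) (φ h₁))
    (fun g g₁ => by
      simp only [map_mul, map_inv, map_pow, map_zpow]
      exact wrel4 q (φ g) (φ g₁))
    (fun g g₁ => by simp only [map_pow]; exact wrel5 q (φ g) (φ g₁))
    (fun g h => by simp only [map_mul, map_inv]; exact wrel6 q (φ g) (φ h))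
    (fun hq g => wrel7 hq (φ g))
    (fun g => wmk_diag q (φ g))

@[simp] lemma extMapHom_wmk (q : ℕ) (φ : G →* H) (g h : G) :
    extMapHom q φ (wmk G q g h) = wmk H q (φ g) (φ h) := by
  unfold extMapHom
  exact extLift_wmk _ _ _ _ _ _ _ _ _ _ _ g h

@[simp] lemma extMapHom_dwmk (q : ℕ) (φ : G →* H) (g : G) :
    extMapHom q φ (dwmk G q g) = dwmk H q (φ g) := by
  unfold extMapHom
  exact extLift_dwmk _ _ _ _ _ _ _ _ _ _ _ g

variable (q : ℕ) (A : Subgroup G) [A.Normal] (hA : (A : Set G) ⊆ Eext G q)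

/-- The inverse map `(G/A) ∧ (G/A) → G ∧ G` when `A ⊆ E^∧_q(G)`. -/
def quotHom : extSquare (G ⧸ A) q →* extSquare G q :=
  extLift q (wbar q A hA) (dbar q A hA)
    (fun x x₁ y => by
      obtain ⟨g, rfl⟩ := QuotientGroup.mk_surjective x
      obtain ⟨g₁, rfl⟩ := QuotientGroup.mk_surjective x₁
      obtain ⟨h, rfl⟩ := QuotientGroup.mk_surjective y
      simp only [← QuotientGroup.mk_mul, ← QuotientGroup.mk_inv, wbar_mk]
      exact wrel1 q g g₁ h)
    (fun x y y₁ => by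
      obtain ⟨g, rfl⟩ := QuotientGroup.mk_surjective x
      obtain ⟨h, rfl⟩ := QuotientGroup.mk_surjective y
      obtain ⟨h₁, rfl⟩ := QuotientGroup.mk_surjective y₁
      simp only [← QuotientGroup.mk_mul, ← QuotientGroup.mk_inv, wbar_mk]
      exact wrel2 q g h h₁)
    (fun x x₁ y₁ => by
      obtain ⟨g, rfl⟩ := QuotientGroup.mk_surjective x
      obtain ⟨g₁, rfl⟩ := QuotientGroup.mk_surjective x₁
      obtain ⟨h₁, rfl⟩ := QuotientGroup.mk_surjective y₁
      simp only [← QuotientGroup.mk_mul, ← QuotientGroup.mk_inv, ← QuotientGroup.mk_pow,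
        wbar_mk, dbar_mk]
      exact wrel3 q g g₁ h₁)
    (fun x x₁ => by
      obtain ⟨g, rfl⟩ := QuotientGroup.mk_surjective x
      obtain ⟨g₁, rfl⟩ := QuotientGroup.mk_surjective x₁
      simp only [← QuotientGroup.mk_mul, ← QuotientGroup.mk_inv, ← QuotientGroup.mk_pow,
        ← QuotientGroup.mk_zpow, wbar_mk, dbar_mk]
      exact wrel4 q g g₁)
    (fun x x₁ => by
      obtain ⟨g, rfl⟩ := QuotientGroup.mk_surjective x
      obtain ⟨g₁, rfl⟩ := QuotientGroup.mk_surjective x₁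
      simp only [← QuotientGroup.mk_pow, wbar_mk, dbar_mk]
      exact wrel5 q g g₁)
    (fun x y => by
      obtain ⟨g, rfl⟩ := QuotientGroup.mk_surjective x
      obtain ⟨h, rfl⟩ := QuotientGroup.mk_surjective y
      simp only [← QuotientGroup.mk_mul, ← QuotientGroup.mk_inv, wbar_mk, dbar_mk]
      exact wrel6 q g h)
    (fun hq x => by
      obtain ⟨g, rfl⟩ := QuotientGroup.mk_surjective x
      rw [dbar_mk]
      exact wrel7 hq g)
    (fun x => by
      obtain ⟨g, rfl⟩ := QuotientGroup.mk_surjective x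
      rw [wbar_mk]
      exact wmk_diag q g)

@[simp] lemma quotHom_wmk (x y : G ⧸ A) :
    quotHom q A hA (wmk (G ⧸ A) q x y) = wbar q A hA x y := by
  unfold quotHom
  exact extLift_wmk _ _ _ _ _ _ _ _ _ _ _ x y

@[simp] lemma quotHom_dwmk (x : G ⧸ A) :
    quotHom q A hA (dwmk (G ⧸ A) q x) = dbar q A hA x := by
  unfold quotHom
  exact extLift_dwmk _ _ _ _ _ _ _ _ _ _ _ x

/-- If `A ⊆ E^∧_q(G)` then `G ∧^q G ≅ (G/A) ∧^q (G/A)`. -/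
noncomputable def quotIso : extSquare G q ≃* extSquare (G ⧸ A) q := by
  refine MonoidHom.toMulEquiv (extMapHom q (QuotientGroup.mk' A)) (quotHom q A hA) ?_ ?_
  · refine extHom_ext (fun g h => ?_) (fun g => ?_)
    simp
    simp
  · refine extHom_ext (fun x y => ?_) (fun x => ?_)
    · obtain ⟨g, rfl⟩ := QuotientGroup.mk_surjective x
      obtain ⟨h, rfl⟩ := QuotientGroup.mk_surjective y
      simp
    · obtain ⟨g, rfl⟩ := QuotientGroup.mk_surjective x
      simp

/-- An isomorphism induces an isomorphism of exterior squares. -/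
noncomputable def mapIso (q : ℕ) (e : G ≃* H) : extSquare G q ≃* extSquare H q := by
  refine MonoidHom.toMulEquiv (extMapHom q e.toMonoidHom) (extMapHom q e.symm.toMonoidHom) ?_ ?_
  · refine extHom_ext (fun g h => ?_) (fun g => ?_)
    · simp
    · simp
  · refine extHom_ext (fun g h => ?_) (fun g => ?_)
    · simp
    · simp

end maps

end QTensor



open QTensor in
/-- If `A ≤ E^∧_q(G)`, `B ≤ E^∧_q(H)` and `G/A ≅ H/B`, then `G ∧^q G ≅ H ∧^q H`. -/
theorem extSquare_iso_of_quotient_iso (q : ℕ) (G H : Type) [Group G] [Group H]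
    (A : Subgroup G) (B : Subgroup H) [A.Normal] [B.Normal]
    (hA : (A : Set G) ⊆ Eext G q) (hB : (B : Set H) ⊆ Eext H q)
    (e : (G ⧸ A) ≃* (H ⧸ B)) :
    Nonempty (extSquare G q ≃* extSquare H q) := by
  exact ⟨((quotIso q A hA).trans (mapIso q e)).trans (quotIso q B hB).symm⟩
end

section
/- Let G be a group and N a normal subgroup of G. If the quotient G/N is capable, then the exterior center Z^∧(G) is contained in N. -/
section CommAux

variable {E : Type} [Group E]

private lemma comm_central_left {x y z : E} (hz : z ∈ Subgroup.center E) :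
    (x * z) * y * (x * z)⁻¹ * y⁻¹ = x * y * x⁻¹ * y⁻¹ := by
  have h : z * y * z⁻¹ = y := by
    rw [← Subgroup.mem_center_iff.mp hz y, mul_inv_cancel_right]
  have e : (x * z) * y * (x * z)⁻¹ * y⁻¹ = x * (z * y * z⁻¹) * x⁻¹ * y⁻¹ := by group
  rw [e, h]

private lemma comm_central_right {x y z : E} (hz : z ∈ Subgroup.center E) :
    x * (y * z) * x⁻¹ * (y * z)⁻¹ = x * y * x⁻¹ * y⁻¹ := by
  have h : z * x⁻¹ * z⁻¹ = x⁻¹ := by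
    rw [← Subgroup.mem_center_iff.mp hz x⁻¹, mul_inv_cancel_right]
  have e : x * (y * z) * x⁻¹ * (y * z)⁻¹ = x * y * (z * x⁻¹ * z⁻¹) * y⁻¹ := by group
  rw [e, h]

private lemma comm_congr {x x' y y' : E}
    (hx : (QuotientGroup.mk x : E ⧸ Subgroup.center E) = QuotientGroup.mk x')
    (hy : (QuotientGroup.mk y : E ⧸ Subgroup.center E) = QuotientGroup.mk y') :
    x * y * x⁻¹ * y⁻¹ = x' * y' * x'⁻¹ * y'⁻¹ := by
  have hzx : x⁻¹ * x' ∈ Subgroup.center E := QuotientGroup.eq.mp hx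
  have hzy : y⁻¹ * y' ∈ Subgroup.center E := QuotientGroup.eq.mp hy
  have ex : x' = x * (x⁻¹ * x') := by group
  have ey : y' = y * (y⁻¹ * y') := by group
  rw [ex, ey, comm_central_left hzx, comm_central_right hzy]

end CommAux

open QTensor in
/-- If `N ⊴ G` and `G/N` is capable, then `Z^∧(G) ≤ N`. -/
theorem zext_le_of_capable_quotient (G : Type) [Group G] (N : Subgroup G) [N.Normal]
    (hcap : Capable (G ⧸ N)) :
    Zext G 0 ⊆ (N : Set G) := by
  classical
  obtain ⟨E, _, ⟨φ⟩⟩ := hcap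
  let p : G →* E ⧸ Subgroup.center E := φ.toMonoidHom.comp (QuotientGroup.mk' N)
  let s : G → E := fun g => Quotient.out (p g)
  have hs : ∀ g : G, (QuotientGroup.mk (s g) : E ⧸ Subgroup.center E) = p g := fun g =>
    Quotient.out_eq' (p g)
  have hmk : ∀ a b : G, (QuotientGroup.mk (s (a * b * a⁻¹)) : E ⧸ Subgroup.center E)
      = QuotientGroup.mk (s a * s b * (s a)⁻¹) := by
    intro a b
    simp only [QuotientGroup.mk_mul, QuotientGroup.mk_inv, hs, map_mul, map_inv]
  have hmk2 : ∀ a b : G, (QuotientGroup.mk (s (a * b)) : E ⧸ Subgroup.center E)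
      = QuotientGroup.mk (s a * s b) := by
    intro a b
    simp only [QuotientGroup.mk_mul, hs, map_mul]
  let f : Gen G → E := fun x =>
    match x with
    | Gen.t a b => s a * s b * (s a)⁻¹ * (s b)⁻¹
    | Gen.d _ => 1
  have hf_t : ∀ a b : G, FreeGroup.lift f (T G a b) = s a * s b * (s a)⁻¹ * (s b)⁻¹ :=
    fun a b => FreeGroup.lift_apply_of
  have hf_d : ∀ a : G, FreeGroup.lift f (D G a) = 1 := fun a => FreeGroup.lift_apply_of
  have hrels : ∀ r ∈ rels G 0, FreeGroup.lift f r = 1 := by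
    intro r hr
    rcases hr with ((((((⟨g, g₁, h, rfl⟩ | ⟨g, h, h₁, rfl⟩) | ⟨g, g₁, h₁, rfl⟩) |
      ⟨g, g₁, rfl⟩) | ⟨g, g₁, rfl⟩) | ⟨g, h, rfl⟩) | ⟨-, g, rfl⟩)
    · simp only [map_mul, map_inv, hf_t]
      rw [mul_inv_eq_one]
      have e1 : s (g * g₁) * s h * (s (g * g₁))⁻¹ * (s h)⁻¹
          = (s g * s g₁) * s h * (s g * s g₁)⁻¹ * (s h)⁻¹ := comm_congr (hmk2 g g₁) rfl
      have e2 : s (g * g₁ * g⁻¹) * s (g * h * g⁻¹) * (s (g * g₁ * g⁻¹))⁻¹ *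
            (s (g * h * g⁻¹))⁻¹
          = (s g * s g₁ * (s g)⁻¹) * (s g * s h * (s g)⁻¹) * (s g * s g₁ * (s g)⁻¹)⁻¹ *
            (s g * s h * (s g)⁻¹)⁻¹ := comm_congr (hmk g g₁) (hmk g h)
      rw [e1, e2]; group
    · simp only [map_mul, map_inv, hf_t]
      rw [mul_inv_eq_one]
      have e1 : s g * s (h * h₁) * (s g)⁻¹ * (s (h * h₁))⁻¹
          = s g * (s h * s h₁) * (s g)⁻¹ * (s h * s h₁)⁻¹ := comm_congr rfl (hmk2 h h₁)
      have e2 : s (h * g * h⁻¹) * s (h * h₁ * h⁻¹) * (s (h * g * h⁻¹))⁻¹ *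
            (s (h * h₁ * h⁻¹))⁻¹
          = (s h * s g * (s h)⁻¹) * (s h * s h₁ * (s h)⁻¹) * (s h * s g * (s h)⁻¹)⁻¹ *
            (s h * s h₁ * (s h)⁻¹)⁻¹ := comm_congr (hmk h g) (hmk h h₁)
      rw [e1, e2]; group
    · simp only [pow_zero, one_mul, inv_one, mul_one, map_mul, map_inv, hf_t, hf_d]
      group
    · simp only [relProd, Nat.zero_sub, List.range_zero, List.map_nil, List.prod_nil,
        map_mul, map_inv, map_one, hf_d]
      group
    · simp only [pow_zero, map_mul, map_inv, hf_t, hf_d]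
      group
    · simp only [map_mul, map_inv, map_pow, pow_zero, hf_d, inv_one, mul_one]
    · exact hf_d g
  let lam : tensorSquare G 0 →* E := PresentedGroup.toGroup hrels
  have hlam_t : ∀ a b : G, lam (tmk G 0 a b) = s a * s b * (s a)⁻¹ * (s b)⁻¹ :=
    fun a b => PresentedGroup.toGroup.of hrels
  have hker : nabla G 0 ≤ lam.ker := by
    apply Subgroup.normalClosure_le_normal
    rintro x ⟨g, rfl⟩
    rw [SetLike.mem_coe, MonoidHom.mem_ker, hlam_t]
    group
  intro g hg
  have hg' : ∀ h : G, wmk G 0 g h = 1 := hg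
  have hcomm : ∀ h : G, s g * s h * (s g)⁻¹ * (s h)⁻¹ = 1 := by
    intro h
    have h2 : tmk G 0 g h ∈ nabla G 0 := (QuotientGroup.eq_one_iff _).mp (hg' h)
    have h3 : lam (tmk G 0 g h) = 1 := hker h2
    rwa [hlam_t] at h3
  have hcenter : s g ∈ Subgroup.center E := by
    rw [Subgroup.mem_center_iff]
    intro e
    have hsurj : Function.Surjective p :=
      φ.surjective.comp (QuotientGroup.mk'_surjective N)
    obtain ⟨h, hh⟩ := hsurj (QuotientGroup.mk e)
    have hme : (QuotientGroup.mk (s h) : E ⧸ Subgroup.center E) = QuotientGroup.mk e := by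
      rw [hs, hh]
    have hz : (s h)⁻¹ * e ∈ Subgroup.center E := QuotientGroup.eq.mp hme
    have hz' : s g * ((s h)⁻¹ * e) = ((s h)⁻¹ * e) * s g :=
      Subgroup.mem_center_iff.mp hz (s g)
    have hsh : s g * s h = s h * s g :=
      mul_inv_eq_iff_eq_mul.mp (mul_inv_eq_one.mp (hcomm h))
    have he : e = s h * ((s h)⁻¹ * e) := by group
    rw [he]
    calc s h * ((s h)⁻¹ * e) * s g
        = s h * (s g * ((s h)⁻¹ * e)) := by rw [mul_assoc, ← hz']
      _ = s h * s g * ((s h)⁻¹ * e) := (mul_assoc _ _ _).symm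
      _ = s g * s h * ((s h)⁻¹ * e) := by rw [hsh]
      _ = s g * (s h * ((s h)⁻¹ * e)) := mul_assoc _ _ _
  have hp1 : p g = 1 := by
    rw [← hs g]
    exact (QuotientGroup.eq_one_iff _).mpr hcenter
  have hq1 : QuotientGroup.mk' N g = 1 := by
    have : φ (QuotientGroup.mk' N g) = 1 := hp1
    exact (MulEquiv.map_eq_one_iff φ).mp this
  exact (QuotientGroup.eq_one_iff g).mp hq1
end

section
/- Let p be a prime and G a finite non-cyclic p-group. Then the exterior center of G is contained in the Frattini subgroup: Z^∧(G) ≤ Φ(G). -/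
open QTensor

/-- Given two characters `α β : G →* Multiplicative (ZMod p)`, the alternating bilinear
form `(x,y) ↦ α x * β y - β x * α y` induces a homomorphism on the exterior square. -/
private lemma exists_extHom {p : ℕ} {G : Type} [Group G]
    (α β : G →* Multiplicative (ZMod p)) :
    ∃ F : extSquare G 0 →* Multiplicative (ZMod p), ∀ g h : G,
      F (wmk G 0 g h) = Multiplicative.ofAdd
        ((α g).toAdd * (β h).toAdd - (β g).toAdd * (α h).toAdd) := by
  classical
  let f0 : Gen G → Multiplicative (ZMod p) := fun i =>
    match i with
    | .t g h => Multiplicative.ofAdd ((α g).toAdd * (β h).toAdd - (β g).toAdd * (α h).toAdd)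
    | .d _ => 1
  have hlift : ∀ x y : G, FreeGroup.lift f0 (T G x y) =
      Multiplicative.ofAdd ((α x).toAdd * (β y).toAdd - (β x).toAdd * (α y).toAdd) :=
    fun x y => FreeGroup.lift_apply_of
  have hliftd : ∀ x : G, FreeGroup.lift f0 (D G x) = 1 := fun x => FreeGroup.lift_apply_of
  have hrel : ∀ r ∈ rels G 0, FreeGroup.lift f0 r = 1 := by
    intro r hr
    simp only [rels, Set.mem_union, Set.mem_setOf_eq] at hr
    obtain ((((((⟨g, g₁, h, rfl⟩ | ⟨g, h, h₁, rfl⟩) | ⟨g, g₁, h₁, rfl⟩) | ⟨g, g₁, rfl⟩) |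
        ⟨g, g₁, rfl⟩) | ⟨g, h, rfl⟩) | ⟨-, g, rfl⟩) := hr
    · simp only [map_mul, map_inv, hlift]
      apply Multiplicative.toAdd.injective
      simp only [toAdd_mul, toAdd_inv, toAdd_ofAdd, toAdd_one, map_mul, map_one, map_inv]
      ring
    · simp only [map_mul, map_inv, hlift]
      apply Multiplicative.toAdd.injective
      simp only [toAdd_mul, toAdd_inv, toAdd_ofAdd, toAdd_one, map_mul, map_one, map_inv]
      ring
    · simp only [pow_zero, one_mul, inv_one, mul_one, map_mul, map_inv, hlift, hliftd]
      group
    · have hrp : relProd G 0 g g₁ = 1 := by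
        simp [relProd]
      simp only [hrp, map_mul, map_inv, hliftd, map_one]
      group
    · simp only [pow_zero, map_mul, map_inv, hlift, hliftd]
      apply Multiplicative.toAdd.injective
      simp only [toAdd_mul, toAdd_inv, toAdd_ofAdd, toAdd_one, map_mul, map_one, map_inv]
      ring
    · simp only [pow_zero, map_mul, map_inv, hliftd, map_one]
      group
    · exact hliftd g
  let F0 : tensorSquare G 0 →* Multiplicative (ZMod p) := PresentedGroup.toGroup hrel
  have hF0t : ∀ x y : G, F0 (tmk G 0 x y) =
      Multiplicative.ofAdd ((α x).toAdd * (β y).toAdd - (β x).toAdd * (α y).toAdd) :=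
    fun x y => PresentedGroup.toGroup.of hrel
  have hker : nabla G 0 ≤ F0.ker := by
    apply Subgroup.normalClosure_le_normal
    rintro x ⟨g, rfl⟩
    have : F0 (tmk G 0 g g) = 1 := by
      rw [hF0t]
      apply Multiplicative.toAdd.injective
      simp only [toAdd_ofAdd, toAdd_one]
      ring
    exact this
  exact ⟨QuotientGroup.lift (nabla G 0) F0 (fun x hx => hker hx), fun g h => hF0t g h⟩

/-- For a maximal subgroup `M` of a finite `p`-group there is a character with kernel `M`. -/
private lemma exists_char {p : ℕ} (hp : p.Prime) {G : Type} [Group G] [Finite G]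
    (hG : IsPGroup p G) {M : Subgroup G} (hM : IsCoatom M) :
    ∃ α : G →* Multiplicative (ZMod p), ∀ x : G, α x = 1 ↔ x ∈ M := by
  haveI : Fact p.Prime := ⟨hp⟩
  haveI hnil : Group.IsNilpotent G := hG.isNilpotent
  have htfae : Group.IsNilpotent G ↔ ∀ H : Subgroup G, IsCoatom H → H.Normal :=
    (isNilpotent_of_finite_tfae (G := G)).out 0 2
  haveI hMn : M.Normal := htfae.mp hnil M hM
  have hsurj := QuotientGroup.mk'_surjective M
  -- every subgroup of the quotient is ⊥ or ⊤
  have hsub : ∀ H : Subgroup (G ⧸ M), H = ⊥ ∨ H = ⊤ := by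
    intro H
    have hle : M ≤ H.comap (QuotientGroup.mk' M) := by
      intro x hx
      have hx1 : QuotientGroup.mk' M x = 1 := (QuotientGroup.eq_one_iff x).mpr hx
      rw [Subgroup.mem_comap, hx1]
      exact one_mem H
    rcases eq_or_lt_of_le hle with heq | hlt
    · left
      have h1 : H = Subgroup.map (QuotientGroup.mk' M) (H.comap (QuotientGroup.mk' M)) :=
        (Subgroup.map_comap_eq_self_of_surjective hsurj H).symm
      rw [h1, ← heq]
      exact (Subgroup.map_eq_bot_iff M).mpr (le_of_eq (QuotientGroup.ker_mk' M).symm)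
    · right
      have h2 := hM.2 _ hlt
      have h3 := congrArg (Subgroup.map (QuotientGroup.mk' M)) h2
      rwa [Subgroup.map_comap_eq_self_of_surjective hsurj,
        Subgroup.map_top_of_surjective _ hsurj] at h3
  -- the quotient is nontrivial
  obtain ⟨y, hy⟩ : ∃ y : G, y ∉ M := by
    by_contra hc
    push_neg at hc
    exact hM.1 ((Subgroup.eq_top_iff' M).mpr hc)
  haveI : Nontrivial (G ⧸ M) :=
    ⟨⟨QuotientGroup.mk y, 1, by simpa [QuotientGroup.eq_one_iff] using hy⟩⟩
  -- the quotient is cyclic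
  obtain ⟨x, hx⟩ := exists_ne (1 : G ⧸ M)
  have hzp : Subgroup.zpowers x = ⊤ := by
    rcases hsub (Subgroup.zpowers x) with hb | ht
    · exact absurd (hb ▸ Subgroup.mem_zpowers x) (by simp [hx])
    · exact ht
  haveI hcyc : IsCyclic (G ⧸ M) := ⟨⟨x, fun y => (Subgroup.eq_top_iff' _).mp hzp y⟩⟩
  -- the quotient has cardinality p
  obtain ⟨k, hk⟩ := IsPGroup.iff_card.mp (hG.to_quotient M)
  have hk1 : k = 1 := by
    rcases Nat.lt_or_ge k 1 with h0 | h1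
    · interval_cases k
      simp only [pow_zero] at hk
      exact absurd hk (Finite.one_lt_card (α := G ⧸ M)).ne'
    rcases Nat.lt_or_ge k 2 with h2 | h2
    · omega
    · exfalso
      obtain ⟨K, hK⟩ := Sylow.exists_subgroup_card_pow_prime (G := G ⧸ M) p
        (n := 1) (by rw [hk]; exact pow_dvd_pow p (by omega))
      rcases hsub K with hb | ht
      · rw [hb] at hK
        simp only [pow_one] at hK
        rw [Subgroup.card_bot] at hK
        exact hp.one_lt.ne hK
      · rw [ht] at hK
        rw [Subgroup.card_top, hk] at hK
        have := Nat.pow_right_injective hp.two_le hK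
        omega
  rw [hk1, pow_one] at hk
  obtain ⟨e⟩ : Nonempty (Multiplicative (ZMod p) ≃* (G ⧸ M)) := by
    subst hk
    exact ⟨zmodCyclicMulEquiv hcyc⟩
  refine ⟨e.symm.toMonoidHom.comp (QuotientGroup.mk' M), fun z => ?_⟩
  simp only [MonoidHom.comp_apply, MulEquiv.coe_toMonoidHom]
  rw [MulEquiv.map_eq_one_iff]
  exact QuotientGroup.eq_one_iff z

open QTensor in
/-- For a finite non-cyclic `p`-group `G`, the exterior center is contained in the
Frattini subgroup: `Z^∧(G) ≤ Φ(G)`. -/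
theorem zext_le_frattini (p : ℕ) (hp : p.Prime) (G : Type) [Group G] [Finite G]
    (hG : IsPGroup p G) (hnc : ¬ IsCyclic G) :
    Zext G 0 ⊆ (frattini G : Set G) := by
  haveI : Fact p.Prime := ⟨hp⟩
  intro g hg
  by_contra hng
  -- a maximal subgroup avoiding g
  have hexM : ∃ M : Subgroup G, IsCoatom M ∧ g ∉ M := by
    by_contra hc
    push_neg at hc
    apply hng
    simp only [frattini, Order.radical, SetLike.mem_coe, Subgroup.mem_iInf, Set.mem_setOf_eq]
    exact fun M hM => hc M hM
  obtain ⟨M, hM, hgM⟩ := hexM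
  -- a maximal subgroup containing g
  haveI : IsCoatomic (Subgroup G) := isCoatomic_of_orderTop_gt_wellFounded wellFounded_gt
  have hzp : Subgroup.zpowers g ≠ ⊤ := by
    intro h
    exact hnc ⟨⟨g, fun x => (Subgroup.eq_top_iff' _).mp h x⟩⟩
  obtain ⟨N, hN, hgN⟩ := (eq_top_or_exists_le_coatom (Subgroup.zpowers g)).resolve_left hzp
  obtain ⟨α, hα⟩ := exists_char hp hG hM
  obtain ⟨β, hβ⟩ := exists_char hp hG hN
  obtain ⟨h, hh⟩ : ∃ h : G, h ∉ N := by
    by_contra hc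
    push_neg at hc
    exact hN.1 ((Subgroup.eq_top_iff' N).mpr hc)
  obtain ⟨F, hF⟩ := exists_extHom α β
  have h1 := hF g h
  rw [hg h, map_one] at h1
  have hbg : (β g).toAdd = 0 := by
    rw [(hβ g).mpr (hgN (Subgroup.mem_zpowers g))]
    rfl
  have hag : (α g).toAdd ≠ 0 := by
    rw [Ne, toAdd_eq_zero]
    exact fun h' => hgM ((hα g).mp h')
  have hbh : (β h).toAdd ≠ 0 := by
    rw [Ne, toAdd_eq_zero]
    exact fun h' => hh ((hβ h).mp h')
  rw [hbg] at h1
  have h2 : (0 : ZMod p) = (α g).toAdd * (β h).toAdd - 0 * (α h).toAdd :=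
    congrArg Multiplicative.toAdd h1
  rw [zero_mul, sub_zero] at h2
  exact mul_ne_zero hag hbh h2.symm
end

section
/- A finite abelian unicentral group is cyclic; that is, if H is a finite abelian group with Z^∧(H) = H, then H is cyclic. -/
open QTensor in
/-- Any alternating biadditive pairing on a commutative group factors through the
exterior square, hence vanishes on pairs whose wedge is trivial. -/
lemma wedge_vanish_aux {H : Type} [CommGroup H] {A : Type} [AddCommGroup A]
    (φ : H → H → A)
    (h1 : ∀ x y z : H, φ (x * y) z = φ x z + φ y z)
    (h2 : ∀ x y z : H, φ x (y * z) = φ x y + φ x z)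
    (h3 : ∀ x : H, φ x x = 0)
    (a b : H) (hab : wmk H 0 a b = 1) : φ a b = 0 := by
  classical
  let f : Gen H → Multiplicative A := fun g => match g with
    | Gen.t x y => Multiplicative.ofAdd (φ x y)
    | Gen.d _ => 1
  have hT : ∀ x y : H, FreeGroup.lift f (T H x y) = Multiplicative.ofAdd (φ x y) :=
    fun x y => FreeGroup.lift_apply_of
  have hD : ∀ x : H, FreeGroup.lift f (D H x) = 1 := fun x => FreeGroup.lift_apply_of
  have conj : ∀ x y : H, x * y * x⁻¹ = y := fun x y => by
    rw [mul_comm x y, mul_inv_cancel_right]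
  have hrels : ∀ r ∈ rels H 0, FreeGroup.lift f r = 1 := by
    rintro r (((((( ⟨g,g₁,h,rfl⟩ | ⟨g,h,h₁,rfl⟩ ) | ⟨g,g₁,h₁,rfl⟩ ) | ⟨g,g₁,rfl⟩ )
        | ⟨g,g₁,rfl⟩ ) | ⟨g,h,rfl⟩ ) | ⟨-, g, rfl⟩)
    · apply Multiplicative.toAdd.injective
      simp [conj, hT, h1]
      abel
    · apply Multiplicative.toAdd.injective
      simp [conj, hT, h2]
    · apply Multiplicative.toAdd.injective
      simp [conj, hT, hD, pow_zero]
    · apply Multiplicative.toAdd.injective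
      simp [relProd, hD]
    · apply Multiplicative.toAdd.injective
      simp [hT, hD, pow_zero, h3]
    · apply Multiplicative.toAdd.injective
      simp [hT, hD, pow_zero]
    · simp [hD]
  let Φ : tensorSquare H 0 →* Multiplicative A := PresentedGroup.toGroup hrels
  have hΦT : ∀ x y : H, Φ (tmk H 0 x y) = Multiplicative.ofAdd (φ x y) := fun x y =>
    PresentedGroup.toGroup.of hrels
  have hker : nabla H 0 ≤ Φ.ker := by
    apply Subgroup.normalClosure_le_normal
    rintro x ⟨g, rfl⟩
    simp [MonoidHom.mem_ker, hΦT, h3]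
  let Ψ : extSquare H 0 →* Multiplicative A := QuotientGroup.lift (nabla H 0) Φ hker
  have : Ψ (wmk H 0 a b) = Multiplicative.ofAdd (φ a b) := by
    exact hΦT a b
  rw [hab, map_one] at this
  exact Multiplicative.ofAdd.injective this.symm


open QTensor in
/-- A finite abelian unicentral group (i.e. `Z^∧(H) = H`) is cyclic. -/
theorem isCyclic_of_unicentral (H : Type) [CommGroup H] [Finite H]
    (h : ∀ g : H, g ∈ Zext H 0) : IsCyclic H := by
  by_contra hnc
  classical
  obtain ⟨ι, hι, n, hn, ⟨e⟩⟩ := CommGroup.equiv_prod_multiplicative_zmod_of_finite H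
  by_cases hcop : Pairwise (Function.onFun Nat.Coprime n)
  · apply hnc
    have h1 : IsAddCyclic (∀ i, ZMod (n i)) :=
      isAddCyclic_of_surjective (ZMod.prodEquivPi n hcop).toAddMonoidHom
        (ZMod.prodEquivPi n hcop).surjective
    have h2 : IsCyclic (Multiplicative (∀ i, ZMod (n i))) := inferInstance
    have h3 : IsCyclic (∀ i, Multiplicative (ZMod (n i))) :=
      isCyclic_of_surjective (MulEquiv.piMultiplicative (fun i => ZMod (n i))).toMonoidHom
        (MulEquiv.piMultiplicative _).surjective
    exact isCyclic_of_surjective e.symm.toMonoidHom e.symm.surjective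
  · simp only [Pairwise] at hcop
    push_neg at hcop
    obtain ⟨i, j, hij, hnij⟩ := hcop
    set p := (Nat.gcd (n i) (n j)).minFac with hp_def
    have hgcd : Nat.gcd (n i) (n j) ≠ 1 := hnij
    have hp : p.Prime := Nat.minFac_prime hgcd
    have hpi : p ∣ n i := (Nat.minFac_dvd _).trans (Nat.gcd_dvd_left _ _)
    have hpj : p ∣ n j := (Nat.minFac_dvd _).trans (Nat.gcd_dvd_right _ _)
    haveI : Fact p.Prime := ⟨hp⟩
    let fA : H → ZMod p := fun x => ZMod.castHom hpi (ZMod p) ((e x i).toAdd)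
    let gA : H → ZMod p := fun x => ZMod.castHom hpj (ZMod p) ((e x j).toAdd)
    have hfA : ∀ x y : H, fA (x * y) = fA x + fA y := fun x y => by
      simp only [fA, ← map_add]
      congr 1
      simp
    have hgA : ∀ x y : H, gA (x * y) = gA x + gA y := fun x y => by
      simp only [gA, ← map_add]
      congr 1
      simp
    let φ : H → H → ZMod p := fun x y => fA x * gA y - fA y * gA x
    have h1 : ∀ x y z : H, φ (x * y) z = φ x z + φ y z := fun x y z => by
      simp [φ, hfA, hgA]; ring
    have h2 : ∀ x y z : H, φ x (y * z) = φ x y + φ x z := fun x y z => by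
      simp [φ, hfA, hgA]; ring
    have h3 : ∀ x : H, φ x x = 0 := fun x => sub_self _
    let a : H := e.symm (Pi.mulSingle i (Multiplicative.ofAdd (1 : ZMod (n i))))
    let b : H := e.symm (Pi.mulSingle j (Multiplicative.ofAdd (1 : ZMod (n j))))
    have hfa : fA a = 1 := by
      simp only [fA, a, MulEquiv.apply_symm_apply, Pi.mulSingle_eq_same, toAdd_ofAdd]
      exact map_one _
    have hga : gA a = 0 := by
      simp only [gA, a, MulEquiv.apply_symm_apply, Pi.mulSingle_eq_of_ne (Ne.symm hij),
        toAdd_one]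
      exact map_zero _
    have hfb : fA b = 0 := by
      simp only [fA, b, MulEquiv.apply_symm_apply, Pi.mulSingle_eq_of_ne hij, toAdd_one]
      exact map_zero _
    have hgb : gA b = 1 := by
      simp only [gA, b, MulEquiv.apply_symm_apply, Pi.mulSingle_eq_same, toAdd_ofAdd]
      exact map_one _
    have hone : φ a b = 1 := by simp [φ, hfa, hga, hfb, hgb]
    have hzero : φ a b = 0 := wedge_vanish_aux φ h1 h2 h3 a b (h a b)
    rw [hone] at hzero
    exact one_ne_zero hzero
end
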